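/- Let μ, C > 0, and for n ≥ N suppose 0 ≤ 1 − μ·α/(j+1) + Cα²/(j+1)² for all j ≥ N. Then for all n > i ≥ N−1, ∏_{j=i+1}^{n−1} (1 − μα/(j+1) + Cα²/(j+1)²) ≤ exp(2Cα²)·((i+2)/(n+1))^{μα}. -/

import Mathlib

lemma tele_sum (f : ℕ → ℝ) (a : ℕ) : ∀ n, a ≤ n →
    ∑ j ∈ Finset.Ico a n, (f (j + 1) - f j) = f n - f a := by
  intro n hn
  induction n with
  | zero => simp [Nat.le_zero.mp hn]
  | succ m ih =>
    rcases Nat.lt_or_ge a (m + 1) with h | h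
    · have ham : a ≤ m := Nat.lt_succ_iff.mp h
      rw [Finset.sum_Ico_succ_top ham, ih ham]; ring
    · have : a = m + 1 := le_antisymm hn h
      simp [this]

/-- Product bound for the harmonic-rate analysis: if the factors
`1 − μα/(j+1) + Cα²/(j+1)²` are nonnegative for `j ≥ N`, then for `n > i` with
`i + 1 ≥ N`,
`∏_{j=i+1}^{n−1} (1 − μα/(j+1) + Cα²/(j+1)²) ≤ exp(2Cα²)·((i+2)/(n+1))^{μα}`. -/
theorem harmonic_product_bound (μ C α : ℝ) (hμ : 0 < μ) (hC : 0 < C) (hα : 0 < α)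
    (N : ℕ)
    (hpos : ∀ j : ℕ, N ≤ j →
      0 ≤ 1 - μ * α / ((j : ℝ) + 1) + C * α ^ 2 / ((j : ℝ) + 1) ^ 2) :
    ∀ i n : ℕ, N ≤ i + 1 → i < n →
      ∏ j ∈ Finset.Ico (i + 1) n,
          (1 - μ * α / ((j : ℝ) + 1) + C * α ^ 2 / ((j : ℝ) + 1) ^ 2)
        ≤ Real.exp (2 * C * α ^ 2) * (((i : ℝ) + 2) / ((n : ℝ) + 1)) ^ (μ * α) := by
  intro i n hN hin
  set g : ℕ → ℝ := fun j => -(μ * α / ((j : ℝ) + 1)) + C * α ^ 2 / ((j : ℝ) + 1) ^ 2 with hg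
  have hjpos : ∀ j : ℕ, (0:ℝ) < (j : ℝ) + 1 := fun j => by positivity
  -- Step 1: product ≤ exp of sum
  have step1 : ∏ j ∈ Finset.Ico (i + 1) n,
      (1 - μ * α / ((j : ℝ) + 1) + C * α ^ 2 / ((j : ℝ) + 1) ^ 2)
      ≤ Real.exp (∑ j ∈ Finset.Ico (i + 1) n, g j) := by
    rw [Real.exp_sum]
    apply Finset.prod_le_prod
    · intro j hj
      exact hpos j (le_trans hN (Finset.mem_Ico.mp hj).1)
    · intro j hj
      have := Real.add_one_le_exp (g j)
      calc 1 - μ * α / ((j : ℝ) + 1) + C * α ^ 2 / ((j : ℝ) + 1) ^ 2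
          = g j + 1 := by rw [hg]; ring
        _ ≤ Real.exp (g j) := Real.add_one_le_exp _
  -- sum splits
  have hsplit : ∑ j ∈ Finset.Ico (i + 1) n, g j
      = -(μ * α * ∑ j ∈ Finset.Ico (i + 1) n, 1 / ((j : ℝ) + 1))
        + C * α ^ 2 * ∑ j ∈ Finset.Ico (i + 1) n, 1 / ((j : ℝ) + 1) ^ 2 := by
    rw [Finset.mul_sum, Finset.mul_sum, ← Finset.sum_neg_distrib, ← Finset.sum_add_distrib]
    exact Finset.sum_congr rfl (fun j _ => by rw [hg]; ring)

  have hin' : i + 1 ≤ n := hin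
  -- Step 2: harmonic sum lower bound
  have hS1 : Real.log (((n : ℝ) + 1) / ((i : ℝ) + 2))
      ≤ ∑ j ∈ Finset.Ico (i + 1) n, 1 / ((j : ℝ) + 1) := by
    have tele := tele_sum (fun j => Real.log ((j : ℝ) + 1)) (i + 1) n hin'
    have hbd : ∀ j ∈ Finset.Ico (i + 1) n,
        Real.log (((j : ℝ) + 1) + 1) - Real.log ((j : ℝ) + 1) ≤ 1 / ((j : ℝ) + 1) := by
      intro j _
      rw [← Real.log_div (by positivity) (ne_of_gt (hjpos j))]
      have h1 : (0:ℝ) < ((j : ℝ) + 1 + 1) / ((j : ℝ) + 1) := by positivity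
      have := Real.log_le_sub_one_of_pos h1
      have heq : ((j : ℝ) + 1 + 1) / ((j : ℝ) + 1) - 1 = 1 / ((j : ℝ) + 1) := by
        field_simp
        ring
      linarith [this, heq ▸ this]
    calc Real.log (((n : ℝ) + 1) / ((i : ℝ) + 2))
        = Real.log ((n : ℝ) + 1) - Real.log ((i : ℝ) + 2) := by
          rw [Real.log_div (by positivity) (by positivity)]
      _ = ∑ j ∈ Finset.Ico (i + 1) n,
            (Real.log (((j : ℝ) + 1) + 1) - Real.log ((j : ℝ) + 1)) := by
          rw [show (∑ j ∈ Finset.Ico (i + 1) n,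
              (Real.log (((j : ℝ) + 1) + 1) - Real.log ((j : ℝ) + 1)))
            = ∑ j ∈ Finset.Ico (i + 1) n,
              ((fun j : ℕ => Real.log ((j : ℝ) + 1)) (j + 1)
                - (fun j : ℕ => Real.log ((j : ℝ) + 1)) j) from
            Finset.sum_congr rfl (fun j _ => by push_cast; ring_nf), tele]
          push_cast; ring_nf
      _ ≤ _ := Finset.sum_le_sum hbd
  -- Step 3: square sum upper bound
  have hS2 : ∑ j ∈ Finset.Ico (i + 1) n, 1 / ((j : ℝ) + 1) ^ 2 ≤ 2 := by
    have tele := tele_sum (fun j => -(1 / (j : ℝ))) (i + 1) n hin'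
    have hbd : ∀ j ∈ Finset.Ico (i + 1) n,
        1 / ((j : ℝ) + 1) ^ 2 ≤ -(1 / ((j : ℝ) + 1)) - -(1 / (j : ℝ)) := by
      intro j hj
      have hj1 : 1 ≤ j := le_trans (Nat.le_add_left 1 i) (Finset.mem_Ico.mp hj).1
      have hjr : (1:ℝ) ≤ (j : ℝ) := by exact_mod_cast hj1
      have h0 : (0:ℝ) < (j : ℝ) := by linarith
      rw [show -(1 / ((j : ℝ) + 1)) - -(1 / (j : ℝ)) = 1 / ((j:ℝ) * ((j:ℝ) + 1)) by
        field_simp; ring]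
      apply one_div_le_one_div_of_le (by positivity)
      nlinarith
    calc ∑ j ∈ Finset.Ico (i + 1) n, 1 / ((j : ℝ) + 1) ^ 2
        ≤ ∑ j ∈ Finset.Ico (i + 1) n,
            (-(1 / ((j : ℝ) + 1)) - -(1 / (j : ℝ))) := Finset.sum_le_sum hbd
      _ = -(1 / (n : ℝ)) - -(1 / ((i : ℝ) + 1)) := by
          rw [show (∑ j ∈ Finset.Ico (i + 1) n, (-(1 / ((j : ℝ) + 1)) - -(1 / (j : ℝ))))
            = ∑ j ∈ Finset.Ico (i + 1) n,
              ((fun j : ℕ => -(1 / (j : ℝ))) (j + 1) - (fun j : ℕ => -(1 / (j : ℝ))) j) from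
            Finset.sum_congr rfl (fun j _ => by push_cast; ring_nf), tele]
          push_cast; ring_nf
      _ ≤ 2 := by
          have h1 : (0:ℝ) < (n : ℝ) := by exact_mod_cast Nat.lt_of_lt_of_le (Nat.succ_pos i) hin'
          have h2 : (1:ℝ) ≤ (i : ℝ) + 1 := by linarith [Nat.cast_nonneg (α := ℝ) i]
          have h3 : 1 / ((i : ℝ) + 1) ≤ 1 := by
            apply div_le_one_of_le₀ h2 (by positivity)
          have h4 : 0 < 1 / (n : ℝ) := by positivity
          linarith
  -- combine
  have key : ∑ j ∈ Finset.Ico (i + 1) n, g j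
      ≤ 2 * C * α ^ 2 + μ * α * Real.log (((i : ℝ) + 2) / ((n : ℝ) + 1)) := by
    rw [hsplit]
    have hμα : 0 < μ * α := mul_pos hμ hα
    have hlog : Real.log (((i : ℝ) + 2) / ((n : ℝ) + 1))
        = -Real.log (((n : ℝ) + 1) / ((i : ℝ) + 2)) := by
      rw [← Real.log_inv]
      congr 1
      field_simp
    rw [hlog]
    have h1 : μ * α * Real.log (((n : ℝ) + 1) / ((i : ℝ) + 2))
        ≤ μ * α * ∑ j ∈ Finset.Ico (i + 1) n, 1 / ((j : ℝ) + 1) :=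
      mul_le_mul_of_nonneg_left hS1 (le_of_lt hμα)
    have h2 : C * α ^ 2 * ∑ j ∈ Finset.Ico (i + 1) n, 1 / ((j : ℝ) + 1) ^ 2
        ≤ C * α ^ 2 * 2 := mul_le_mul_of_nonneg_left hS2 (by positivity)
    linarith
  calc ∏ j ∈ Finset.Ico (i + 1) n,
        (1 - μ * α / ((j : ℝ) + 1) + C * α ^ 2 / ((j : ℝ) + 1) ^ 2)
      ≤ Real.exp (∑ j ∈ Finset.Ico (i + 1) n, g j) := step1
    _ ≤ Real.exp (2 * C * α ^ 2 + μ * α * Real.log (((i : ℝ) + 2) / ((n : ℝ) + 1))) :=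
        Real.exp_le_exp.mpr key
    _ = Real.exp (2 * C * α ^ 2) * (((i : ℝ) + 2) / ((n : ℝ) + 1)) ^ (μ * α) := by
        rw [Real.exp_add, Real.rpow_def_of_pos (by positivity)]
        ring_nf
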